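/- arXiv:1405.4294 — 3 statements merged into one kernel-verified Lean document; each statement's English description precedes it below -/
import Mathlib

section
/- Let G₀(λ) = Σ_{j=1}^k α_j ‖x_j‖² g(α_j λ) with g(λ) = (λ − sin λ)/(8 sin(λ/2)²), 0 < α_1 < … < α_k, and at least one x_j ≠ 0. If z = G₀(λ) for some λ > 0 then λ < 8|z|/(α_1²‖x‖²) + π α_k/α_1², where ‖x‖² = Σ_j ‖x_j‖². -/
noncomputable def g (l : ℝ) : ℝ := (l - Real.sin l) / (8 * (Real.sin (l / 2)) ^ 2)

lemma g_lower (t : ℝ) (ht : 0 < t) (hs : Real.sin (t / 2) ≠ 0) :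
    (t - Real.pi) / 8 < g t := by
  have hs2 : 0 < (Real.sin (t / 2)) ^ 2 := by positivity
  have hs1 : (Real.sin (t / 2)) ^ 2 ≤ 1 := by
    have := Real.neg_one_le_sin (t / 2)
    have := Real.sin_le_one (t / 2)
    nlinarith
  have hnum : 0 < t - Real.sin t := by
    have := Real.sin_lt ht
    linarith
  have h1 : (t - Real.sin t) / 8 ≤ (t - Real.sin t) / (8 * (Real.sin (t / 2)) ^ 2) :=
    div_le_div_of_nonneg_left (le_of_lt hnum) (by positivity) (by nlinarith)
  have h2 : (t - Real.pi) / 8 < (t - Real.sin t) / 8 := by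
    have := Real.sin_le_one t
    have := Real.pi_gt_three
    linarith
  unfold g
  linarith

theorem lambda_upper_bound (k : ℕ) (hk : 1 ≤ k) (α : Fin k → ℝ) (α₁ αₖ : ℝ)
    (hα₁ : 0 < α₁) (hbounds : ∀ j, α₁ ≤ α j ∧ α j ≤ αₖ)
    (d : Fin k → ℕ) (x : (j : Fin k) → EuclideanSpace ℝ (Fin (d j)))
    (hx : ∃ j, x j ≠ 0)
    (l z : ℝ) (hl : 0 < l)
    (hpole : ∀ j, x j ≠ 0 → Real.sin (α j * l / 2) ≠ 0)
    (hz : z = ∑ j, α j * g (α j * l) * ‖x j‖ ^ 2) :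
    l < 8 * |z| / (α₁ ^ 2 * (∑ j, ‖x j‖ ^ 2)) + Real.pi * αₖ / α₁ ^ 2 := by
  obtain ⟨j₀, hj₀⟩ := hx
  set S : ℝ := ∑ j, ‖x j‖ ^ 2 with hS_def
  have hterm : ∀ j : Fin k, x j ≠ 0 →
      (l * α₁ ^ 2 - Real.pi * αₖ) / 8 * ‖x j‖ ^ 2 < α j * g (α j * l) * ‖x j‖ ^ 2 := by
    intro j hxj
    have hαj := hbounds j
    have hαpos : 0 < α j := lt_of_lt_of_le hα₁ hαj.1
    have hprod : 0 < α j * l := mul_pos hαpos hl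
    have hg := g_lower (α j * l) hprod (hpole j hxj)
    have hxn : 0 < ‖x j‖ ^ 2 := by
      have : ‖x j‖ ≠ 0 := norm_ne_zero_iff.2 hxj
      positivity
    have hpi : 0 < Real.pi := Real.pi_pos
    have h1 : (l * α₁ ^ 2 - Real.pi * αₖ) / 8 < α j * g (α j * l) := by
      have h2 : α j * ((α j * l - Real.pi) / 8) < α j * g (α j * l) :=
        (mul_lt_mul_iff_right₀ hαpos).2 hg
      have hsq : α₁ ^ 2 * l ≤ α j ^ 2 * l := by nlinarith [mul_le_mul hαj.1 hαj.1 hα₁.le hαpos.le]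
      have hpiα : Real.pi * α j ≤ Real.pi * αₖ := by nlinarith [hαj.2]
      nlinarith [h2]
    exact (mul_lt_mul_iff_left₀ hxn).2 h1
  have hle : ∀ j ∈ Finset.univ, (l * α₁ ^ 2 - Real.pi * αₖ) / 8 * ‖x j‖ ^ 2
      ≤ α j * g (α j * l) * ‖x j‖ ^ 2 := by
    intro j _
    by_cases hxj : x j = 0
    · simp [hxj]
    · exact le_of_lt (hterm j hxj)
  have hsum : ∑ j, (l * α₁ ^ 2 - Real.pi * αₖ) / 8 * ‖x j‖ ^ 2 < z := by
    rw [hz]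
    exact Finset.sum_lt_sum hle ⟨j₀, Finset.mem_univ j₀, hterm j₀ hj₀⟩
  have hsum' : (l * α₁ ^ 2 - Real.pi * αₖ) / 8 * S < z := by
    rw [hS_def, Finset.mul_sum]; exact hsum
  have hSpos : 0 < S := by
    have : 0 < ‖x j₀‖ ^ 2 := by
      have : ‖x j₀‖ ≠ 0 := norm_ne_zero_iff.2 hj₀
      positivity
    exact Finset.sum_pos' (fun j _ => by positivity) ⟨j₀, Finset.mem_univ j₀, this⟩
  have hzabs : z ≤ |z| := le_abs_self z
  have hA : 0 < α₁ ^ 2 := by positivity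
  have hkey : l * (α₁ ^ 2 * S) < 8 * |z| + Real.pi * αₖ * S := by nlinarith
  have hdiv : l < (8 * |z| + Real.pi * αₖ * S) / (α₁ ^ 2 * S) :=
    (lt_div_iff₀ (by positivity)).2 hkey
  have heq : (8 * |z| + Real.pi * αₖ * S) / (α₁ ^ 2 * S)
      = 8 * |z| / (α₁ ^ 2 * S) + Real.pi * αₖ / α₁ ^ 2 := by
    field_simp
  linarith [heq ▸ hdiv]
end

section
/- Let g(λ) = (λ − sin λ)/(8 sin(λ/2)²) and 0 < δ ≤ 1. For any integer n ≥ 0 and any λ in the interval [2nπ + δπ, 2(n+1)π − δπ] one has g(λ) ≤ g((2(n+1) − δ)π) = (2π/(8 sin(δπ/2)²))·n + (2π − δπ + sin(δπ))/(8 sin(δπ/2)²). -/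
open Real

private lemma sub_sin_mono {a b : ℝ} (h : a ≤ b) : a - Real.sin a ≤ b - Real.sin b := by
  have hs := Real.sin_sub_sin b a
  have h1 : |Real.sin ((b - a) / 2)| ≤ (b - a) / 2 := by
    calc |Real.sin ((b - a) / 2)| ≤ |(b - a) / 2| := Real.abs_sin_le_abs
    _ = (b - a) / 2 := abs_of_nonneg (by linarith)
  have h2 : |Real.cos ((b + a) / 2)| ≤ 1 := Real.abs_cos_le_one _
  have h3 : Real.sin ((b - a) / 2) * Real.cos ((b + a) / 2) ≤ (b - a) / 2 := by
    calc Real.sin ((b - a) / 2) * Real.cos ((b + a) / 2)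
        ≤ |Real.sin ((b - a) / 2) * Real.cos ((b + a) / 2)| := le_abs_self _
      _ = |Real.sin ((b - a) / 2)| * |Real.cos ((b + a) / 2)| := abs_mul _ _
      _ ≤ ((b - a) / 2) * 1 := by
          apply mul_le_mul h1 h2 (abs_nonneg _) (by linarith)
      _ = (b - a) / 2 := mul_one _
  nlinarith [hs]

private lemma g_eq (l : ℝ) : g l = (l - Real.sin l) / (4 * (1 - Real.cos l)) := by
  unfold g
  congr 1
  have := Real.sin_sq_eq_half_sub (l / 2)
  rw [this]
  rw [show 2 * (l / 2) = l by ring]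
  ring

private lemma cos_le_cos_delta {δ t : ℝ} (hδ : 0 < δ) (hδ1 : δ ≤ 1)
    (h1 : δ * Real.pi ≤ t) (h2 : t ≤ 2 * Real.pi - δ * Real.pi) :
    Real.cos t ≤ Real.cos (δ * Real.pi) := by
  have hπ := Real.pi_pos
  have hδπ : 0 < δ * Real.pi := mul_pos hδ hπ
  have hδπle : δ * Real.pi ≤ Real.pi := by nlinarith
  rcases le_total t Real.pi with ht | ht
  · exact Real.cos_le_cos_of_nonneg_of_le_pi hδπ.le ht h1
  · rw [← Real.cos_two_pi_sub]
    exact Real.cos_le_cos_of_nonneg_of_le_pi hδπ.le (by linarith) (by linarith)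

theorem g_bound_on_truncated_interval (δ : ℝ) (hδ : 0 < δ) (hδ1 : δ ≤ 1) (n : ℕ) :
    (∀ l ∈ Set.Icc (2 * n * Real.pi + δ * Real.pi) (2 * (n + 1) * Real.pi - δ * Real.pi),
      g l ≤ g ((2 * (n + 1) - δ) * Real.pi)) ∧
    g ((2 * (n + 1) - δ) * Real.pi) =
      (2 * Real.pi / (8 * Real.sin (δ * Real.pi / 2) ^ 2)) * n +
        (2 * Real.pi - δ * Real.pi + Real.sin (δ * Real.pi)) /
          (8 * Real.sin (δ * Real.pi / 2) ^ 2) := by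
  have hπ := Real.pi_pos
  have hδπ : 0 < δ * Real.pi := mul_pos hδ hπ
  have hδπle : δ * Real.pi ≤ Real.pi := by nlinarith
  set y : ℝ := (2 * (n + 1) - δ) * Real.pi with hy
  -- cos y = cos (δπ), sin y = - sin (δπ)
  have hycos : Real.cos y = Real.cos (δ * Real.pi) := by
    have : y = -(δ * Real.pi) + (n + 1 : ℤ) * (2 * Real.pi) := by push_cast; ring
    rw [this, Real.cos_add_int_mul_two_pi, Real.cos_neg]
  have hysin : Real.sin y = -Real.sin (δ * Real.pi) := by
    have : y = -(δ * Real.pi) + (n + 1 : ℤ) * (2 * Real.pi) := by push_cast; ring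
    rw [this, Real.sin_add_int_mul_two_pi, Real.sin_neg]
  -- positivity of 1 - cos(δπ)
  have hcosδ : Real.cos (δ * Real.pi) < 1 := by
    refine lt_of_le_of_ne (Real.cos_le_one _) (fun h => ?_)
    have := (Real.cos_eq_one_iff_of_lt_of_lt (by nlinarith) (by nlinarith)).1 h
    linarith
  have hc : 0 < 1 - Real.cos (δ * Real.pi) := by linarith
  -- sin(δπ/2)^2 = (1 - cos δπ)/2
  have hsq : Real.sin (δ * Real.pi / 2) ^ 2 = (1 - Real.cos (δ * Real.pi)) / 2 := by
    have := Real.sin_sq_eq_half_sub (δ * Real.pi / 2)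
    rw [this, show 2 * (δ * Real.pi / 2) = δ * Real.pi by ring]
    ring
  -- value of g y
  have hgy : g y = (y + Real.sin (δ * Real.pi)) / (4 * (1 - Real.cos (δ * Real.pi))) := by
    rw [g_eq, hysin, hycos]; ring_nf
  constructor
  · intro l hl
    obtain ⟨hl1, hl2⟩ := hl
    have hly : l ≤ y := by rw [hy]; nlinarith
    have hl0 : 0 < l := by nlinarith [mul_nonneg (Nat.cast_nonneg n : (0:ℝ) ≤ n) hπ.le]
    -- cos l ≤ cos δπ
    have hcl : Real.cos l ≤ Real.cos (δ * Real.pi) := by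
      have hrew : Real.cos l = Real.cos ((l - 2 * n * Real.pi) + (n : ℤ) * (2 * Real.pi)) := by
        congr 1; push_cast; ring
      rw [hrew, Real.cos_add_int_mul_two_pi]
      exact cos_le_cos_delta hδ hδ1 (by linarith) (by nlinarith)
    have hcl' : 0 < 1 - Real.cos l := by linarith
    have hnum : l - Real.sin l ≤ y - Real.sin y := sub_sin_mono hly
    have hnum0 : 0 ≤ y - Real.sin y := by
      have : Real.sin y ≤ y := Real.sin_le (by nlinarith [mul_nonneg (Nat.cast_nonneg n : (0:ℝ) ≤ (n:ℝ)) hπ.le] : (0:ℝ) ≤ y)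
      linarith
    rw [g_eq, g_eq]
    exact div_le_div₀ hnum0 hnum (by linarith) (by linarith)
  · rw [hgy, hsq, hy]
    have h2 : (1 - Real.cos (δ * Real.pi)) ≠ 0 := ne_of_gt hc
    field_simp
    ring
end

section
/- Let g(λ) = (λ − sin λ)/(8 sin(λ/2)²). Then on each interval (2kπ, 2(k+1)π) with k ≥ 0, g is strictly convex. -/
open Real Set

noncomputable def g1 (x : ℝ) : ℝ :=
  (2 * Real.sin (x / 2) - x * Real.cos (x / 2)) / (8 * Real.sin (x / 2) ^ 3)

noncomputable def g2 (x : ℝ) : ℝ :=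
  (x * (3 - 2 * Real.sin (x / 2) ^ 2) - 6 * Real.sin (x / 2) * Real.cos (x / 2)) /
    (16 * Real.sin (x / 2) ^ 4)

lemma sin_half_hasDerivAt (x : ℝ) :
    HasDerivAt (fun y => Real.sin (y / 2)) (Real.cos (x / 2) * (1 / 2)) x :=
  ((hasDerivAt_id x).div_const 2).sin

lemma cos_half_hasDerivAt (x : ℝ) :
    HasDerivAt (fun y => Real.cos (y / 2)) (-Real.sin (x / 2) * (1 / 2)) x :=
  ((hasDerivAt_id x).div_const 2).cos

lemma sin_eq (x : ℝ) : Real.sin x = 2 * Real.sin (x / 2) * Real.cos (x / 2) := by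
  have := Real.sin_two_mul (x / 2)
  rw [show 2 * (x / 2) = x by ring] at this
  linarith

lemma cos_eq (x : ℝ) : Real.cos x = 1 - 2 * Real.sin (x / 2) ^ 2 := by
  have := Real.cos_two_mul (x / 2)
  rw [show 2 * (x / 2) = x by ring] at this
  have h := Real.sin_sq_add_cos_sq (x / 2)
  nlinarith

lemma phi_deriv (u : ℝ) :
    HasDerivAt (fun v => v * (2 + Real.cos v) - 3 * Real.sin v)
      (2 - 2 * Real.cos u - u * Real.sin u) u := by
  have h1 : HasDerivAt (fun v : ℝ => v * (2 + Real.cos v))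
      (1 * (2 + Real.cos u) + u * (0 + -Real.sin u)) u :=
    (hasDerivAt_id u).mul ((hasDerivAt_const u (2:ℝ)).add (Real.hasDerivAt_cos u))
  have h2 : HasDerivAt (fun v : ℝ => 3 * Real.sin v) (3 * Real.cos u) u :=
    (Real.hasDerivAt_sin u).const_mul 3
  have := h1.sub h2
  refine this.congr_deriv (Eq.symm ?_)
  ring

lemma key_ineq {u : ℝ} (hu : 0 < u) : 3 * Real.sin u < u * (2 + Real.cos u) := by
  rcases le_or_gt u π with h | h
  · -- use monotonicity on [0, π]
    set φ : ℝ → ℝ := fun v => v * (2 + Real.cos v) - 3 * Real.sin v with hφ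
    have hmono : StrictMonoOn φ (Set.Icc 0 π) := by
      apply strictMonoOn_of_deriv_pos (convex_Icc 0 π)
      · fun_prop
      · intro v hv
        rw [interior_Icc] at hv
        rw [(phi_deriv v).deriv]
        have hv1 : 0 < v / 2 := by linarith [hv.1]
        have hv2 : v / 2 < π / 2 := by linarith [hv.2]
        have hs : 0 < Real.sin (v / 2) := Real.sin_pos_of_pos_of_lt_pi hv1 (by linarith [Real.pi_pos])
        have hc : 0 < Real.cos (v / 2) := Real.cos_pos_of_mem_Ioo ⟨by linarith [Real.pi_pos], hv2⟩
        have htan := Real.lt_tan hv1 hv2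
        rw [Real.tan_eq_sin_div_cos] at htan
        have h2 : v / 2 * Real.cos (v / 2) < Real.sin (v / 2) :=
          (lt_div_iff₀ hc).mp htan
        rw [cos_eq v, sin_eq v]
        nlinarith
    have h0 : φ 0 = 0 := by simp [hφ]
    have := hmono (Set.left_mem_Icc.mpr Real.pi_pos.le) ⟨hu.le, h⟩ hu
    rw [h0] at this
    simpa [hφ] using this
  · have h3 : (3:ℝ) < u := lt_trans Real.pi_gt_three h
    nlinarith [Real.neg_one_le_cos u, Real.sin_le_one u]

lemma hasDerivAt_g {x : ℝ} (hs : Real.sin (x / 2) ≠ 0) : HasDerivAt g (g1 x) x := by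
  have hD : HasDerivAt (fun y => 8 * Real.sin (y / 2) ^ 2)
      (8 * (2 * Real.sin (x / 2) ^ 1 * (Real.cos (x / 2) * (1 / 2)))) x :=
    ((sin_half_hasDerivAt x).pow 2).const_mul 8
  have hN : HasDerivAt (fun y : ℝ => y - Real.sin y) (1 - Real.cos x) x :=
    (hasDerivAt_id x).sub (Real.hasDerivAt_sin x)
  have hDne : 8 * Real.sin (x / 2) ^ 2 ≠ 0 := by positivity
  have := hN.div hD hDne
  refine this.congr_deriv (Eq.symm ?_)
  unfold g1
  rw [sin_eq x, cos_eq x]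
  have h := Real.sin_sq_add_cos_sq (x / 2)
  field_simp
  linear_combination (-2 * Real.sin (x/2)) * h

lemma hasDerivAt_g1 {x : ℝ} (hs : Real.sin (x / 2) ≠ 0) : HasDerivAt g1 (g2 x) x := by
  have hN : HasDerivAt (fun y => 2 * Real.sin (y / 2) - y * Real.cos (y / 2))
      (2 * (Real.cos (x / 2) * (1 / 2)) -
        (1 * Real.cos (x / 2) + x * (-Real.sin (x / 2) * (1 / 2)))) x :=
    ((sin_half_hasDerivAt x).const_mul 2).sub ((hasDerivAt_id x).mul (cos_half_hasDerivAt x))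
  have hD : HasDerivAt (fun y => 8 * Real.sin (y / 2) ^ 3)
      (8 * (3 * Real.sin (x / 2) ^ 2 * (Real.cos (x / 2) * (1 / 2)))) x :=
    ((sin_half_hasDerivAt x).pow 3).const_mul 8
  have hDne : 8 * Real.sin (x / 2) ^ 3 ≠ 0 := by
    intro h; apply hs; nlinarith [pow_eq_zero_iff (n := 3) (by norm_num) |>.mp (by linarith : Real.sin (x/2)^3 = 0)]
  have := hN.div hD hDne
  refine this.congr_deriv (Eq.symm ?_)
  unfold g2
  have h := Real.sin_sq_add_cos_sq (x / 2)
  field_simp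
  linear_combination (-48 * x) * h

theorem g_strictConvexOn (k : ℕ) :
    StrictConvexOn ℝ (Set.Ioo (2 * k * Real.pi) (2 * (k + 1) * Real.pi)) g := by
  have hsne : ∀ x ∈ Set.Ioo (2 * (k:ℝ) * π) (2 * ((k:ℝ) + 1) * π), Real.sin (x / 2) ≠ 0 := by
    intro x hx hzero
    obtain ⟨n, hn⟩ := Real.sin_eq_zero_iff.mp hzero
    have hπ := Real.pi_pos
    have h1 : (k:ℝ) < n := by
      have : 2 * (k:ℝ) * π < 2 * ((n:ℝ) * π) := by rw [hn]; linarith [hx.1]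
      nlinarith
    have h2 : (n:ℝ) < (k:ℝ) + 1 := by
      have : 2 * ((n:ℝ) * π) < 2 * ((k:ℝ) + 1) * π := by rw [hn]; linarith [hx.2]
      nlinarith
    have h1' : (k:ℤ) < n := by exact_mod_cast h1
    have h2' : n < (k:ℤ) + 1 := by exact_mod_cast h2
    omega
  apply strictConvexOn_of_deriv2_pos (convex_Ioo _ _)
  · apply ContinuousOn.div
    · fun_prop
    · fun_prop
    · intro x hx
      have := hsne x hx
      positivity
  · intro x hx
    rw [interior_Ioo] at hx
    have hs := hsne x hx
    have hU : IsOpen {y : ℝ | Real.sin (y / 2) ≠ 0} :=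
      isOpen_compl_iff.mpr (isClosed_eq (by fun_prop) continuous_const) |>.mono (by rfl)
    have hev : deriv g =ᶠ[nhds x] g1 := by
      filter_upwards [hU.mem_nhds hs] with y hy
      exact (hasDerivAt_g hy).deriv
    have h2 : (deriv^[2] g) x = g2 x := by
      have : deriv (deriv g) x = deriv g1 x := hev.deriv_eq
      rw [show deriv^[2] g = deriv (deriv g) from rfl, this, (hasDerivAt_g1 hs).deriv]
    rw [h2]
    have hx0 : 0 < x := by
      have : (0:ℝ) ≤ 2 * (k:ℝ) * π := by positivity
      linarith [hx.1]
    have hkey := key_ineq hx0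
    rw [sin_eq x, cos_eq x] at hkey
    unfold g2
    apply div_pos
    · nlinarith
    · positivity
end
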